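/- Let k ≥ 2 and D = {1,...,k−1}, and let S* = kℕ = {0, k, 2k, ...}. For every D-avoiding set S ⊆ ℕ with S ≠ S*, there is an efficiency gap: limsup_{q→1⁻} (S_q − (S*)_q) ≤ −1/k; i.e., S_q ⪯ (S*)_q − 1/k + O(1−q) in the germ-ordering. -/

import Mathlib

open Finset

noncomputable def genFun (S : Set ℕ) (q : ℝ) : ℝ := ∑' n : S, q ^ (n : ℕ)

/-- `S` is `D`-avoiding: no two elements of `S` differ by an element of `D`. -/
def DAvoiding (D : Finset ℕ) (S : Set ℕ) : Prop :=
  ∀ x ∈ S, ∀ d ∈ D, x + d ∉ S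

lemma one_sub_pow_le_aux (q : ℝ) (h0 : 0 ≤ q) (h1 : q ≤ 1) (m : ℕ) :
    1 - q ^ m ≤ m * (1 - q) := by
  induction m with
  | zero => simp
  | succ n ih =>
      have hq : q ^ n ≤ 1 := pow_le_one₀ h0 h1
      have hqn : 0 ≤ q ^ n := pow_nonneg h0 n
      rw [pow_succ]
      push_cast
      nlinarith

lemma arith_aux (k m : ℕ) (hk : 1 ≤ k) (q : ℝ) (h0 : 0 < q) (h1 : q < 1) :
    1 / (k : ℝ) - ((m : ℝ) + 1) * (1 - q) ≤ (1 - q) * q ^ m * (1 - q ^ k)⁻¹ := by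
  set G : ℝ := ∑ j ∈ range k, q ^ j with hGdef
  have hgeom : (1 - q) * G = 1 - q ^ k := by
    have := geom_sum_mul q k
    linear_combination -this
  have hG1 : 1 ≤ G := by
    have : (q : ℝ) ^ 0 ≤ G := by
      apply Finset.single_le_sum (f := fun j => q ^ j)
      · intro j _; positivity
      · simpa using Nat.lt_of_lt_of_le Nat.zero_lt_one hk
    simpa using this
  have hGk : G ≤ k := by
    calc G ≤ ∑ _j ∈ range k, (1 : ℝ) := by
            apply Finset.sum_le_sum
            intro j _; exact pow_le_one₀ h0.le h1.le
      _ = k := by simp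
  have hqk : q ^ k < 1 := pow_lt_one₀ h0.le h1 (by omega)
  have hpos : (0 : ℝ) < 1 - q ^ k := by linarith
  have hmq : 1 - q ^ m ≤ m * (1 - q) := one_sub_pow_le_aux q h0.le h1.le m
  have hGpos : (0 : ℝ) < G := by linarith
  have h1q : (1 - q) ≠ 0 := by linarith
  have hrw : (1 - q) * q ^ m * (1 - q ^ k)⁻¹ = q ^ m / G := by
    rw [← hgeom, mul_inv]
    calc (1 - q) * q ^ m * ((1 - q)⁻¹ * G⁻¹)
        = ((1 - q) * (1 - q)⁻¹) * (q ^ m * G⁻¹) := by ring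
      _ = q ^ m / G := by rw [mul_inv_cancel₀ h1q, one_mul, div_eq_mul_inv]
  rw [hrw, le_div_iff₀ hGpos]
  have hk' : (1 : ℝ) ≤ k := by exact_mod_cast hk
  have hkpos : (0 : ℝ) < k := by linarith
  have key : G ≤ k * q ^ m + k * ((m : ℝ) * (1 - q)) := by nlinarith
  have h5 : (1 / (k : ℝ)) * G ≤ q ^ m + (m : ℝ) * (1 - q) := by
    have := mul_le_mul_of_nonneg_left key (le_of_lt (one_div_pos.2 hkpos))
    have hcan : (1 / (k : ℝ)) * k = 1 := by field_simp
    nlinarith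
  have h6 : (m : ℝ) * (1 - q) ≤ ((m : ℝ) + 1) * (1 - q) * G := by
    have hmnn : (0 : ℝ) ≤ (m : ℝ) := Nat.cast_nonneg m
    nlinarith [mul_nonneg (mul_nonneg (by linarith : (0:ℝ) ≤ 1 - q) (by linarith : (0:ℝ) ≤ G - 1)) (by positivity : (0:ℝ) ≤ (m:ℝ) + 1)]
  nlinarith

lemma genFun_multiples (k : ℕ) (hk : 2 ≤ k) (q : ℝ) (h0 : 0 ≤ q) (h1 : q < 1) :
    genFun {n : ℕ | k ∣ n} q = (1 - q ^ k)⁻¹ := by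
  have hkpos : 0 < k := by omega
  let e : ℕ ≃ {n : ℕ | k ∣ n} :=
    { toFun := fun i => ⟨k * i, Dvd.intro i rfl⟩
      invFun := fun n => (n : ℕ) / k
      left_inv := fun i => by simp [Nat.mul_div_cancel_left _ hkpos]
      right_inv := fun n => by
        ext
        exact Nat.mul_div_cancel' n.2 }
  have := (Equiv.tsum_eq e (fun n : {n : ℕ | k ∣ n} => q ^ (n : ℕ))).symm
  rw [genFun, this]
  have heq : ∀ i : ℕ, q ^ ((e i : ℕ)) = (q ^ k) ^ i := by
    intro i
    simp only [e, Equiv.coe_fn_mk]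
    rw [← pow_mul]
  rw [tsum_congr heq]
  exact tsum_geometric_of_lt_one (pow_nonneg h0 k) (pow_lt_one₀ h0 h1 (by omega))

set_option maxHeartbeats 1000000 in
theorem efficiency_gap (k : ℕ) (hk : 2 ≤ k) (S : Set ℕ)
    (hS : DAvoiding (Finset.Icc 1 (k - 1)) S)
    (hne : S ≠ {n : ℕ | k ∣ n}) :
    ∃ C > (0 : ℝ), ∃ ε > (0 : ℝ), ∀ q ∈ Set.Ioo (1 - ε) (1 : ℝ),
      genFun S q ≤ genFun {n : ℕ | k ∣ n} q - 1 / k + C * (1 - q) := by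
  classical
  have hkpos : 0 < k := by omega
  have hstep : ∀ x ∈ S, ∀ y ∈ S, x < y → x + k ≤ y := by
    intro x hx y hy hxy
    by_contra h
    push_neg at h
    have hd : y - x ∈ Finset.Icc 1 (k - 1) := by
      rw [Finset.mem_Icc]; omega
    have h2 := hS x hx (y - x) hd
    have h3 : x + (y - x) = y := by omega
    rw [h3] at h2
    exact h2 hy
  by_cases hfin : S.Finite
  · -- finite case
    haveI := hfin.fintype
    set N := Fintype.card ↥S with hN
    refine ⟨1, one_pos, 1 / (k * (N + 1)), by positivity, ?_⟩
    rintro q ⟨hq1, hq2⟩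
    have hek : (1 : ℝ) / (k * (N + 1)) ≤ 1 := by
      rw [div_le_one (by positivity)]
      have : (1 : ℝ) ≤ k := by exact_mod_cast (by omega : 1 ≤ k)
      nlinarith [Nat.cast_nonneg (α := ℝ) N]
    have hq0 : 0 < q := by linarith
    have hSle : genFun S q ≤ N := by
      rw [genFun, tsum_fintype]
      calc ∑ n : S, q ^ (n : ℕ) ≤ ∑ _n : S, (1 : ℝ) := by
            apply Finset.sum_le_sum
            intro n _
            exact pow_le_one₀ hq0.le hq2.le
        _ = N := by simp; rw [Set.ncard_eq_toFinset_card', Set.toFinset_card, hN]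
    have hqk : q ^ k < 1 := pow_lt_one₀ hq0.le hq2 (by omega)
    have hpos : (0 : ℝ) < 1 - q ^ k := by linarith
    have hmq : 1 - q ^ k ≤ k * (1 - q) := one_sub_pow_le_aux q hq0.le hq2.le k
    have hkR : (0 : ℝ) < k := by exact_mod_cast hkpos
    have hTge : (N : ℝ) + 1 ≤ (1 - q ^ k)⁻¹ := by
      rw [le_inv_comm₀ (by positivity) hpos, inv_eq_one_div,
        le_div_iff₀ (by positivity : (0:ℝ) < (N:ℝ) + 1)]
      have h1q : 1 - q < 1 / (k * (N + 1)) := by linarith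
      have hcan : (1 / ((k:ℝ) * ((N:ℝ) + 1))) * ((k:ℝ) * ((N:ℝ) + 1)) = 1 := by
        field_simp
      nlinarith [mul_le_mul_of_nonneg_right hmq (by positivity : (0:ℝ) ≤ (N:ℝ) + 1),
        mul_lt_mul_of_pos_right h1q (by positivity : (0:ℝ) < (k:ℝ) * ((N:ℝ) + 1))]
    have hT := genFun_multiples k hk q hq0.le hq2
    have hkinv : 1 / (k : ℝ) ≤ 1 := by
      rw [div_le_one hkR]
      exact_mod_cast (by omega : 1 ≤ k)
    rw [hT]
    nlinarith
  · -- infinite case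
    haveI : Infinite ↥S := Set.infinite_coe_iff.2 hfin
    obtain ⟨e⟩ : Nonempty (ℕ ≃o ↥S) := ⟨Nat.Subtype.orderIsoOfNat S⟩
    set s : ℕ → ℕ := fun i => (e i : ℕ) with hs
    have hsmono : StrictMono s := by
      intro i j hij
      exact e.strictMono hij
    have hsmem : ∀ i, s i ∈ S := fun i => (e i).2
    have hstep' : ∀ i, s i + k ≤ s (i + 1) := fun i =>
      hstep _ (hsmem i) _ (hsmem (i + 1)) (hsmono (lt_add_one i))
    have hgrow : ∀ i t, s i + t * k ≤ s (i + t) := by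
      intro i t
      induction t with
      | zero => simp
      | succ n ih =>
          have := hstep' (i + n)
          have he : i + (n + 1) = (i + n) + 1 := by omega
          rw [he]
          calc s i + (n + 1) * k = (s i + n * k) + k := by ring_nf
            _ ≤ s (i + n) + k := by omega
            _ ≤ s (i + n + 1) := hstep' (i + n)
    have hlow : ∀ i, i * k ≤ s i := by
      intro i
      have := hgrow 0 i
      simpa using le_trans (by omega) this
    obtain ⟨i0, hi0⟩ : ∃ i, i * k + 1 ≤ s i := by
      by_contra h
      push_neg at h
      have heq : ∀ i, s i = i * k := fun i => by have := h i; have := hlow i; omega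
      apply hne
      ext n
      constructor
      · intro hn
        obtain ⟨i, hi⟩ := e.surjective ⟨n, hn⟩
        have hsin : s i = n := by
          show (e i : ℕ) = n
          rw [hi]
        rw [heq i] at hsin
        exact ⟨i, by rw [← hsin, Nat.mul_comm]⟩
      · rintro ⟨c, rfl⟩
        have := hsmem c
        rwa [heq c, Nat.mul_comm] at this
    have htail : ∀ j, (j + i0) * k + 1 ≤ s (j + i0) := by
      intro j
      have h1 := hgrow i0 j
      have h2 : i0 + j = j + i0 := by omega
      rw [h2] at h1
      nlinarith
    refine ⟨(i0 * k : ℝ) + 1, by positivity, 1, one_pos, ?_⟩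
    rintro q ⟨hq1, hq2⟩
    have hq0 : 0 < q := by linarith
    have hgeo : Summable (fun n : ℕ => q ^ n) :=
      summable_geometric_of_lt_one hq0.le hq2
    have hsum1 : Summable (fun i : ℕ => q ^ s i) :=
      hgeo.comp_injective hsmono.injective
    have hqk : q ^ k < 1 := pow_lt_one₀ hq0.le hq2 (by omega)
    have hqknn : 0 ≤ q ^ k := by positivity
    have hSgen : genFun S q = ∑' i : ℕ, q ^ s i :=
      (Equiv.tsum_eq e.toEquiv (fun n : ↥S => q ^ (n : ℕ))).symm
    -- tail summabilities
    have hsumtail1 : Summable (fun j : ℕ => q ^ s (j + i0)) :=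
      (summable_nat_add_iff i0).2 hsum1
    have hinj2 : Function.Injective (fun j : ℕ => (j + i0) * k + 1) := by
      intro a b hab
      simp only at hab
      have : (a + i0) * k = (b + i0) * k := by omega
      have := Nat.eq_of_mul_eq_mul_right hkpos this
      omega
    have hsumtail2 : Summable (fun j : ℕ => q ^ ((j + i0) * k + 1)) :=
      hgeo.comp_injective hinj2
    have hinj3 : Function.Injective (fun j : ℕ => (j + i0) * k) := by
      intro a b hab
      simp only at hab
      have := Nat.eq_of_mul_eq_mul_right hkpos hab
      omega
    have hsumtail3 : Summable (fun j : ℕ => q ^ ((j + i0) * k)) :=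
      hgeo.comp_injective hinj3
    -- tail values
    have htv2 : ∑' j : ℕ, q ^ ((j + i0) * k + 1) = q ^ (i0 * k + 1) * (1 - q ^ k)⁻¹ := by
      have hc : ∀ j : ℕ, q ^ ((j + i0) * k + 1) = q ^ (i0 * k + 1) * (q ^ k) ^ j := by
        intro j
        rw [← pow_mul, ← pow_add]
        congr 1
        ring
      rw [tsum_congr hc, tsum_mul_left, tsum_geometric_of_lt_one hqknn hqk]
    have htv3 : ∑' j : ℕ, q ^ ((j + i0) * k) = q ^ (i0 * k) * (1 - q ^ k)⁻¹ := by
      have hc : ∀ j : ℕ, q ^ ((j + i0) * k) = q ^ (i0 * k) * (q ^ k) ^ j := by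
        intro j
        rw [← pow_mul, ← pow_add]
        congr 1
        ring
      rw [tsum_congr hc, tsum_mul_left, tsum_geometric_of_lt_one hqknn hqk]
    -- splitting genFun S
    have hsplitS : genFun S q = (∑ i ∈ range i0, q ^ s i) + ∑' j : ℕ, q ^ s (j + i0) := by
      rw [hSgen, ← Summable.sum_add_tsum_nat_add i0 hsum1]
    -- splitting genFun T
    have hsumIK : Summable (fun i : ℕ => q ^ (i * k)) := by
      have : ∀ i : ℕ, q ^ (i * k) = (q ^ k) ^ i := by
        intro i; rw [← pow_mul, Nat.mul_comm]
      rw [show (fun i : ℕ => q ^ (i * k)) = fun i : ℕ => (q ^ k) ^ i from funext this]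
      exact summable_geometric_of_lt_one hqknn hqk
    have hT : genFun {n : ℕ | k ∣ n} q = (1 - q ^ k)⁻¹ := genFun_multiples k hk q hq0.le hq2
    have hTsum : genFun {n : ℕ | k ∣ n} q = ∑' i : ℕ, q ^ (i * k) := by
      rw [hT]
      have : ∀ i : ℕ, q ^ (i * k) = (q ^ k) ^ i := by
        intro i; rw [← pow_mul, Nat.mul_comm]
      rw [tsum_congr this, tsum_geometric_of_lt_one hqknn hqk]
    have hsplitT : genFun {n : ℕ | k ∣ n} q
        = (∑ i ∈ range i0, q ^ (i * k)) + q ^ (i0 * k) * (1 - q ^ k)⁻¹ := by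
      rw [hTsum, ← Summable.sum_add_tsum_nat_add i0 hsumIK, htv3]
    -- termwise bounds
    have hprefix : (∑ i ∈ range i0, q ^ s i) ≤ ∑ i ∈ range i0, q ^ (i * k) := by
      apply Finset.sum_le_sum
      intro i _
      exact pow_le_pow_of_le_one hq0.le hq2.le (hlow i)
    have htailb : (∑' j : ℕ, q ^ s (j + i0)) ≤ ∑' j : ℕ, q ^ ((j + i0) * k + 1) := by
      apply Summable.tsum_le_tsum _ hsumtail1 hsumtail2
      intro j
      exact pow_le_pow_of_le_one hq0.le hq2.le (htail j)
    -- final arithmetic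
    have harith := arith_aux k (i0 * k) (by omega) q hq0 hq2
    have hexp : q ^ (i0 * k) - q ^ (i0 * k + 1) = (1 - q) * q ^ (i0 * k) := by
      rw [pow_succ]; ring
    rw [hsplitS, hsplitT]
    rw [htv2] at htailb
    have hinvpos : (0 : ℝ) < (1 - q ^ k)⁻¹ := inv_pos.2 (by linarith)
    push_cast at harith ⊢
    nlinarith [hprefix, htailb, harith, hexp,
      mul_pos (pow_pos hq0 (i0 * k)) hinvpos]
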